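/- Let Y be a nonnegative real random variable with distribution function F_Y. Then there exists a constant C > 0 such that for infinitely many positive integers n, E[Y ∧ 2^n] / (max{2^n (1 − F_Y(2^n)), 1}) ≤ C log(2^n). -/

import Mathlib

open MeasureTheory ProbabilityTheory Filter Set

lemma aux_integrable {Ω : Type} [MeasurableSpace Ω] (P : Measure Ω) [IsProbabilityMeasure P]
    (Y : Ω → ℝ) (hY : Measurable Y) (hY0 : ∀ ω, 0 ≤ Y ω) (c : ℝ) (hc : 0 ≤ c) :
    Integrable (fun ω => min (Y ω) c) P := by
  refine (integrable_const c).mono' ((hY.min measurable_const).aestronglyMeasurable) ?_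
  filter_upwards with ω
  rw [Real.norm_eq_abs, abs_of_nonneg (le_min (hY0 ω) hc)]
  exact min_le_right _ _

lemma aux_tail {Ω : Type} [MeasurableSpace Ω] (P : Measure Ω) [IsProbabilityMeasure P]
    (Y : Ω → ℝ) (hY : Measurable Y) (t : ℝ) :
    1 - (P {ω | Y ω ≤ t}).toReal = (P {ω | t < Y ω}).toReal := by
  have hset : MeasurableSet {ω | Y ω ≤ t} := measurableSet_le hY measurable_const
  have hc : {ω | t < Y ω} = {ω | Y ω ≤ t}ᶜ := by ext ω; simp [not_le]
  rw [hc, prob_compl_eq_one_sub hset,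
    ENNReal.toReal_sub_of_le prob_le_one (by simp)]
  simp

lemma aux_increment {Ω : Type} [MeasurableSpace Ω] (P : Measure Ω) [IsProbabilityMeasure P]
    (Y : Ω → ℝ) (hY : Measurable Y) (hY0 : ∀ ω, 0 ≤ Y ω) (t : ℝ) (ht : 0 < t) :
    (∫ ω, min (Y ω) (2 * t) ∂P) ≤
      (∫ ω, min (Y ω) t ∂P) + t * (P {ω | t < Y ω}).toReal := by
  have hset : MeasurableSet {ω | t < Y ω} := measurableSet_lt measurable_const hY
  have hind : Integrable ({ω | t < Y ω}.indicator (fun _ => t)) P :=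
    (integrable_const t).indicator hset
  have h1 : (∫ ω, min (Y ω) (2 * t) ∂P) ≤
      ∫ ω, (min (Y ω) t + {ω | t < Y ω}.indicator (fun _ => t) ω) ∂P := by
    refine integral_mono (aux_integrable P Y hY hY0 _ (by positivity))
      ((aux_integrable P Y hY hY0 _ ht.le).add hind) (fun ω => ?_)
    by_cases h : t < Y ω
    · have hmem : ω ∈ {ω | t < Y ω} := h
      rw [Set.indicator_of_mem hmem, min_eq_right h.le]
      calc min (Y ω) (2 * t) ≤ 2 * t := min_le_right _ _
        _ = t + t := by ring
    · have hmem : ω ∉ {ω | t < Y ω} := h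
      rw [Set.indicator_of_notMem hmem, add_zero]
      push_neg at h
      rw [min_eq_left h, min_eq_left (h.trans (by linarith))]
  rw [integral_add (aux_integrable P Y hY hY0 _ ht.le) hind,
    integral_indicator_const _ hset] at h1
  simpa [smul_eq_mul, mul_comm, measureReal_def] using h1

/-- For any nonnegative random variable `Y`, there is `C > 0` such that for infinitely many `n`,
`E[Y ∧ 2^n] / (2^n(1 - F_Y(2^n)) ∨ 1) ≤ C log(2^n)`. -/
theorem truncated_mean_ratio_small_io {Ω : Type} [MeasurableSpace Ω]
    (P : Measure Ω) [IsProbabilityMeasure P] (Y : Ω → ℝ)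
    (hY : Measurable Y) (hY0 : ∀ ω, 0 ≤ Y ω) :
    ∃ C : ℝ, 0 < C ∧ ∀ N : ℕ, ∃ n : ℕ, N ≤ n ∧ 1 ≤ n ∧
      (∫ ω, min (Y ω) ((2 : ℝ) ^ n) ∂P) /
          max ((2 : ℝ) ^ n * (1 - (P {ω | Y ω ≤ (2 : ℝ) ^ n}).toReal)) 1
        ≤ C * Real.log ((2 : ℝ) ^ n) := by
  by_contra hcon
  push_neg at hcon
  obtain ⟨N, hN⟩ := hcon 5 (by norm_num)
  set a : ℕ → ℝ := fun n => ∫ ω, min (Y ω) ((2 : ℝ) ^ n) ∂P with ha_def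
  set D : ℕ → ℝ := fun n =>
    max ((2 : ℝ) ^ n * (1 - (P {ω | Y ω ≤ (2 : ℝ) ^ n}).toReal)) 1 with hD_def
  set n0 : ℕ := max N 1 with hn0_def
  have hn01 : 1 ≤ n0 := le_max_right _ _
  have ha0 : ∀ n, 0 ≤ a n := fun n =>
    integral_nonneg (fun ω => le_min (hY0 ω) (by positivity))
  have hD1 : ∀ n, (1 : ℝ) ≤ D n := fun n => le_max_right _ _
  -- the key consequence of the contradiction hypothesis
  have h3 : ∀ n, n0 ≤ n → 3 * (n : ℝ) * D n < a n := by
    intro n hn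
    have h5 := hN n (le_trans (le_max_left _ _) hn) (le_trans (le_max_right _ _) hn)
    have hlog : Real.log ((2 : ℝ) ^ n) = n * Real.log 2 := by
      rw [Real.log_pow]
    have hl2 : (0.6931471803 : ℝ) < Real.log 2 := Real.log_two_gt_d9
    have hn1 : (1 : ℝ) ≤ (n : ℝ) := by
      exact_mod_cast (le_trans (le_max_right _ _) hn : 1 ≤ n)
    have h35 : 3 * (n : ℝ) ≤ 5 * Real.log ((2 : ℝ) ^ n) := by
      rw [hlog]; nlinarith
    have hDpos : (0 : ℝ) < D n := lt_of_lt_of_le one_pos (hD1 n)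
    exact (lt_div_iff₀ hDpos).mp (lt_of_le_of_lt h35 h5)
  -- step bound derived from h3
  have hstep : ∀ n, n0 ≤ n → a (n + 1) ≤ a n * (1 + 1 / (3 * n)) := by
    intro n hn
    have hn1 : (1 : ℝ) ≤ (n : ℝ) := by exact_mod_cast le_trans hn01 hn
    have hnpos : (0 : ℝ) < 3 * (n : ℝ) := by linarith
    have htpos : (0 : ℝ) < (2 : ℝ) ^ n := by positivity
    have hinc := aux_increment P Y hY hY0 ((2 : ℝ) ^ n) htpos
    have hpow : ((2 : ℝ) ^ (n + 1)) = 2 * (2 : ℝ) ^ n := by ring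
    have ha1 : a (n + 1) ≤ a n + (2 : ℝ) ^ n * (P {ω | (2 : ℝ) ^ n < Y ω}).toReal := by
      simpa [ha_def, hpow] using hinc
    have hT : (2 : ℝ) ^ n * (P {ω | (2 : ℝ) ^ n < Y ω}).toReal ≤ D n := by
      rw [← aux_tail P Y hY ((2 : ℝ) ^ n)]
      exact le_max_left _ _
    have hTle : (2 : ℝ) ^ n * (P {ω | (2 : ℝ) ^ n < Y ω}).toReal ≤ a n / (3 * n) := by
      rw [le_div_iff₀ hnpos]
      calc (2 : ℝ) ^ n * (P {ω | (2 : ℝ) ^ n < Y ω}).toReal * (3 * n)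
          = 3 * (n : ℝ) * ((2 : ℝ) ^ n * (P {ω | (2 : ℝ) ^ n < Y ω}).toReal) := by ring
        _ ≤ 3 * (n : ℝ) * D n := by
            apply mul_le_mul_of_nonneg_left hT; positivity
        _ ≤ a n := (h3 n hn).le
    have heq : a n + a n / (3 * (n : ℝ)) = a n * (1 + 1 / (3 * n)) := by
      field_simp
    calc a (n + 1) ≤ a n + (2 : ℝ) ^ n * (P {ω | (2 : ℝ) ^ n < Y ω}).toReal := ha1
      _ ≤ a n + a n / (3 * n) := by linarith
      _ = a n * (1 + 1 / (3 * n)) := heq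
  -- sqrt growth bound
  set K : ℝ := a n0 / Real.sqrt n0 with hK_def
  have hn0pos : (0 : ℝ) < (n0 : ℝ) := by exact_mod_cast hn01
  have hsq0 : (0 : ℝ) < Real.sqrt n0 := Real.sqrt_pos.mpr hn0pos
  have hK0 : 0 ≤ K := div_nonneg (ha0 n0) hsq0.le
  have hgrow : ∀ m, n0 ≤ m → a m ≤ K * Real.sqrt m := by
    intro m hm
    induction m, hm using Nat.le_induction with
    | base => rw [hK_def, div_mul_cancel₀ _ hsq0.ne']
    | succ m hm ih =>
      have hm1 : (1 : ℝ) ≤ (m : ℝ) := by exact_mod_cast le_trans hn01 hm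
      have hmpos : (0 : ℝ) < (m : ℝ) := by linarith
      have hfac : (0 : ℝ) < 1 + 1 / (3 * (m : ℝ)) := by positivity
      have h1 : a (m + 1) ≤ K * Real.sqrt m * (1 + 1 / (3 * m)) := by
        calc a (m + 1) ≤ a m * (1 + 1 / (3 * m)) := hstep m hm
          _ ≤ K * Real.sqrt m * (1 + 1 / (3 * m)) :=
              mul_le_mul_of_nonneg_right ih hfac.le
      have h2 : Real.sqrt m * (1 + 1 / (3 * m)) ≤ Real.sqrt ((m : ℝ) + 1) := by
        have hnn : 0 ≤ Real.sqrt m * (1 + 1 / (3 * m)) := by positivity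
        rw [← Real.sqrt_sq hnn]
        apply Real.sqrt_le_sqrt
        rw [mul_pow, Real.sq_sqrt hmpos.le]
        have e : (1 : ℝ) + 1 / (3 * (m : ℝ)) = (3 * m + 1) / (3 * m) := by
          field_simp
        rw [e, div_pow, ← mul_div_assoc, div_le_iff₀ (by positivity)]
        nlinarith
      have hc : ((m + 1 : ℕ) : ℝ) = (m : ℝ) + 1 := by push_cast; ring
      calc a (m + 1) ≤ K * Real.sqrt m * (1 + 1 / (3 * m)) := h1
        _ = K * (Real.sqrt m * (1 + 1 / (3 * m))) := by ring
        _ ≤ K * Real.sqrt ((m : ℝ) + 1) := mul_le_mul_of_nonneg_left h2 hK0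
        _ = K * Real.sqrt ((m + 1 : ℕ) : ℝ) := by rw [hc]
  -- final contradiction
  set m : ℕ := n0 + Nat.ceil (K ^ 2) + 1 with hm_def
  have hm : n0 ≤ m := by omega
  have h1 := hgrow m hm
  have h2 := h3 m hm
  have hm1 : (1 : ℝ) ≤ (m : ℝ) := by exact_mod_cast le_trans hn01 hm
  have hK2 : K ^ 2 < (m : ℝ) := by
    have hlt : Nat.ceil (K ^ 2) < m := by omega
    calc K ^ 2 ≤ (Nat.ceil (K ^ 2) : ℝ) := Nat.le_ceil _
      _ < m := by exact_mod_cast hlt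
  have hsm : Real.sqrt m * Real.sqrt m = m := Real.mul_self_sqrt (by linarith)
  have hsmpos : 0 < Real.sqrt (m : ℝ) := Real.sqrt_pos.mpr (by linarith)
  have hKlt : K < Real.sqrt (m : ℝ) := by nlinarith
  have hKsm : K * Real.sqrt (m : ℝ) < 3 * m := by nlinarith
  have h3m : 3 * (m : ℝ) ≤ 3 * m * D m := by nlinarith [hD1 m]
  linarith
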